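/- arXiv:2210.12606 — 4 statements merged into one kernel-verified Lean document; each statement's English description precedes it below -/
import Mathlib

section
/- For any real-valued random variable X with finite variance, max(0, E[X]) ≤ E[max(0, X)] ≤ max(0, E[X]) + (1/2)·√(Var(X)). -/
open MeasureTheory ProbabilityTheory

/-- for a random variable `X` with finite variance,
`max 0 (E[X]) ≤ E[max 0 X] ≤ max 0 (E[X]) + (1/2)√(Var X)`. -/
theorem positive_part_expectation_bounds {Ω : Type*} [MeasurableSpace Ω]
    (μ : Measure Ω) [IsProbabilityMeasure μ] (X : Ω → ℝ) (hX : MemLp X 2 μ) :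
    max 0 (∫ ω, X ω ∂μ) ≤ (∫ ω, max 0 (X ω) ∂μ) ∧
    (∫ ω, max 0 (X ω) ∂μ) ≤ max 0 (∫ ω, X ω ∂μ) + (1 / 2) * Real.sqrt (variance X μ) := by
  have hXi : Integrable X μ := hX.integrable one_le_two
  set m : ℝ := ∫ ω, X ω ∂μ with hm
  have hpos : Integrable (fun ω => max 0 (X ω)) μ := by
    refine hXi.mono (aestronglyMeasurable_const.sup hXi.1) (ae_of_all _ fun ω => ?_)
    simp only [Real.norm_eq_abs]
    rcases le_total 0 (X ω) with h | h
    · rw [max_eq_right h]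
    · rw [max_eq_left h]; simpa using abs_nonneg (X ω)
  constructor
  · refine max_le (integral_nonneg fun ω => le_max_left _ _) ?_
    exact integral_mono hXi hpos fun ω => le_max_right _ _
  · -- upper bound
    set Y : Ω → ℝ := fun ω => X ω - m with hYdef
    have hY : MemLp Y 2 μ := hX.sub (memLp_const m)
    have hYi : Integrable Y μ := hXi.sub (integrable_const m)
    have hYabs : Integrable (fun ω => |Y ω|) μ := hYi.abs
    have hYint : ∫ ω, Y ω ∂μ = 0 := by
      simp [hYdef, integral_sub hXi (integrable_const m), ← hm]
    have hY2 : Integrable (fun ω => Y ω ^ 2) μ := hY.integrable_sq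
    have hvar : variance X μ = ∫ ω, Y ω ^ 2 ∂μ := by
      rw [variance_eq_integral hX.aemeasurable]
    -- Cauchy-Schwarz: (∫|Y|)^2 ≤ ∫ Y^2
    set a : ℝ := ∫ ω, |Y ω| ∂μ with ha
    have hanon : 0 ≤ a := integral_nonneg fun ω => abs_nonneg _
    have hCS : a ^ 2 ≤ ∫ ω, Y ω ^ 2 ∂μ := by
      have h0 : 0 ≤ ∫ ω, (|Y ω| - a) ^ 2 ∂μ := integral_nonneg fun ω => sq_nonneg _
      have hexp : ∫ ω, (|Y ω| - a) ^ 2 ∂μ = (∫ ω, Y ω ^ 2 ∂μ) - a ^ 2 := by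
        have : ∀ ω, (|Y ω| - a) ^ 2 = Y ω ^ 2 - 2 * a * |Y ω| + a ^ 2 := by
          intro ω; rw [sub_sq, sq_abs]; ring
        simp_rw [this]
        have hI1 : Integrable (fun ω => Y ω ^ 2 - 2 * a * |Y ω|) μ :=
          hY2.sub (hYabs.const_mul _)
        rw [integral_add hI1 (integrable_const _),
          integral_sub hY2 (hYabs.const_mul _), integral_const_mul, integral_const]
        simp [← ha]
        ring
      linarith [hexp ▸ h0]
    have haleq : a ≤ Real.sqrt (variance X μ) := by
      rw [hvar]
      exact (Real.le_sqrt hanon (integral_nonneg fun ω => sq_nonneg _)).mpr hCS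
    -- ∫ max 0 Y = a / 2
    have hposY : Integrable (fun ω => max 0 (Y ω)) μ := by
      refine hYi.mono (aestronglyMeasurable_const.sup hYi.1) (ae_of_all _ fun ω => ?_)
      simp only [Real.norm_eq_abs]
      rcases le_total 0 (Y ω) with h | h
      · rw [max_eq_right h]
      · rw [max_eq_left h]; simpa using abs_nonneg (Y ω)
    have hmaxY : ∫ ω, max 0 (Y ω) ∂μ = a / 2 := by
      have : ∀ ω, max 0 (Y ω) = (Y ω + |Y ω|) / 2 := by
        intro ω
        rcases le_total 0 (Y ω) with h | h
        · rw [max_eq_right h, abs_of_nonneg h]; ring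
        · rw [max_eq_left h, abs_of_nonpos h]; ring
      simp_rw [this]
      rw [integral_div, integral_add hYi hYabs, hYint, zero_add, ← ha]
    -- pointwise bound
    have hpt : ∀ ω, max 0 (X ω) ≤ max 0 m + max 0 (Y ω) := by
      intro ω
      have hx : X ω = m + Y ω := by simp [hYdef]
      rw [hx]
      exact max_le (add_nonneg (le_max_left _ _) (le_max_left _ _))
        (add_le_add (le_max_right _ _) (le_max_right _ _))
    calc ∫ ω, max 0 (X ω) ∂μ ≤ ∫ ω, (max 0 m + max 0 (Y ω)) ∂μ :=
          integral_mono hpos ((integrable_const _).add hposY) hpt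
      _ = max 0 m + a / 2 := by
          rw [integral_add (integrable_const _) hposY, integral_const, hmaxY]; simp
      _ ≤ max 0 m + (1 / 2) * Real.sqrt (variance X μ) := by linarith
end

section
/- Suppose features x₁,…,x_d are conditionally independent given the label y ∈ {-1,1}, and feature i satisfies E[xᵢ | y=-1] ≤ 0 ≤ E[xᵢ | y=1]. Then any minimizer w* of the regularized soft-SVM objective satisfies wᵢ* ≥ 0. Symmetrically, if E[xᵢ | y=1] ≤ 0 ≤ E[xᵢ | y=-1], then wᵢ* ≤ 0. -/
open MeasureTheory Finset
open scoped ENNReal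

/-- The joint distribution of `(x,y)` on `ℝ^d × {-1,1}`: with probability `q` the label is `1`
and the features are drawn from the product measure `Measure.pi ηp` (features conditionally
independent given the label), with probability `1-q` the label is `-1` and the features are
drawn from `Measure.pi ηn`. -/
noncomputable def jointMeasure {d : ℕ} (ηp ηn : Fin d → Measure ℝ) (q : ℝ≥0∞) :
    Measure ((Fin d → ℝ) × ℝ) :=
  q • (Measure.pi ηp).map (fun x => (x, (1 : ℝ))) +
    (1 - q) • (Measure.pi ηn).map (fun x => (x, (-1 : ℝ)))

/-- The regularized soft-SVM objective. -/
noncomputable def svmLoss {d : ℕ} (μ : Measure ((Fin d → ℝ) × ℝ)) (lam : ℝ)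
    (w : Fin d → ℝ) : ℝ :=
  (∫ p, max 0 (1 - p.2 * ∑ i, w i * p.1 i) ∂μ) + lam / 2 * ∑ i, (w i) ^ 2

/- ### Auxiliary lemmas -/

/-- Pointwise convexity inequality for the hinge function. -/
lemma hinge_pt (u t : ℝ) :
    max 0 u ≤ max 0 (u + t) + (if 0 < u then (1:ℝ) else 0) * (-t) := by
  by_cases h : 0 < u
  · rw [if_pos h, max_eq_right h.le]
    have := le_max_right (0:ℝ) (u + t)
    linarith
  · rw [if_neg h, max_eq_left (not_lt.mp h)]
    have := le_max_left (0:ℝ) (u + t)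
    linarith

/-- Integrability of a function of a single coordinate w.r.t. a product measure. -/
lemma integrable_comp_eval {n : ℕ} (η : Fin (n+1) → Measure ℝ)
    [∀ j, IsProbabilityMeasure (η j)] (j : Fin (n+1)) (g : ℝ → ℝ)
    (hg : Integrable g (η j)) :
    Integrable (fun x : Fin (n+1) → ℝ => g (x j)) (Measure.pi η) := by
  have hmp := measurePreserving_piFinSuccAbove η j
  have hemb := (MeasurableEquiv.piFinSuccAbove (fun _ : Fin (n+1) => ℝ) j).measurableEmbedding
  have h2 : Integrable (fun y : ℝ × (Fin n → ℝ) => g y.1)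
      ((η j).prod (Measure.pi fun k => η (j.succAbove k))) := by
    simpa using hg.mul_prod (integrable_const (1:ℝ))
  have := (hmp.integrable_comp_emb hemb (g := fun y : ℝ × (Fin n → ℝ) => g y.1)).mpr h2
  exact this

/-- Factorization of the integral of a product of a function not depending on coordinate `i`
with a function of coordinate `i`, over a product of probability measures. -/
lemma pi_factor {n : ℕ} (η : Fin (n+1) → Measure ℝ) [∀ j, IsProbabilityMeasure (η j)]
    (i : Fin (n+1)) (F : (Fin (n+1) → ℝ) → ℝ) (g : ℝ → ℝ)
    (hFi : ∀ x t, F (Function.update x i t) = F x) :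
    ∫ x, F x * g (x i) ∂Measure.pi η
      = (∫ x, F x ∂Measure.pi η) * ∫ t, g t ∂η i := by
  have hmp := measurePreserving_piFinSuccAbove η i
  have hemb := (MeasurableEquiv.piFinSuccAbove (fun _ : Fin (n+1) => ℝ) i).measurableEmbedding
  have key : ∀ x : Fin (n+1) → ℝ, F (i.insertNth 0 (i.removeNth x)) = F x := by
    intro x
    rw [Fin.insertNth_removeNth, hFi]
  have h1 : ∫ x, F x * g (x i) ∂Measure.pi η
      = ∫ y : ℝ × (Fin n → ℝ), g y.1 * F (i.insertNth 0 y.2)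
          ∂((η i).prod (Measure.pi fun j => η (i.succAbove j))) := by
    rw [← hmp.integral_comp hemb]
    congr 1
    funext x
    simp only [MeasurableEquiv.piFinSuccAbove, MeasurableEquiv.coe_mk,
      Equiv.coe_fn_mk, Fin.insertNthEquiv, Equiv.coe_fn_symm_mk]
    rw [mul_comm, key x]
  have h3 : ∫ x, F x ∂Measure.pi η
      = ∫ y : ℝ × (Fin n → ℝ), (1:ℝ) * F (i.insertNth 0 y.2)
          ∂((η i).prod (Measure.pi fun j => η (i.succAbove j))) := by
    rw [← hmp.integral_comp hemb]
    congr 1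
    funext x
    simp only [MeasurableEquiv.piFinSuccAbove, MeasurableEquiv.coe_mk,
      Equiv.coe_fn_mk, Fin.insertNthEquiv, Equiv.coe_fn_symm_mk, one_mul]
    rw [key x]
  rw [h1, h3, integral_prod_mul g (fun r => F (i.insertNth 0 r)),
    integral_prod_mul (fun _ : ℝ => (1:ℝ)) (fun r => F (i.insertNth 0 r)), integral_const,
    probReal_univ, smul_eq_mul]
  ring

/-- Integrability of the hinge loss w.r.t. a product of probability measures with
integrable coordinates. -/
lemma hinge_integrable {n : ℕ} (η : Fin (n+1) → Measure ℝ)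
    [∀ j, IsProbabilityMeasure (η j)] (hi : ∀ j, Integrable (fun t : ℝ => t) (η j))
    (w : Fin (n+1) → ℝ) (y : ℝ) :
    Integrable (fun x : Fin (n+1) → ℝ => max 0 (1 - y * ∑ j, w j * x j)) (Measure.pi η) := by
  have hS : Integrable (fun x : Fin (n+1) → ℝ => ∑ j, w j * x j) (Measure.pi η) :=
    integrable_finset_sum _ (fun j _ =>
      (integrable_comp_eval η j (fun t => t) (hi j)).const_mul (w j))
  have hbound : Integrable (fun x : Fin (n+1) → ℝ => 1 + |y| * |∑ j, w j * x j|)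
      (Measure.pi η) := (integrable_const 1).add ((hS.abs).const_mul |y|)
  refine hbound.mono ?_ ?_
  · have hm : Measurable (fun x : Fin (n+1) → ℝ => 1 - y * ∑ j, w j * x j) := by fun_prop
    exact (measurable_const.max hm).aestronglyMeasurable
  · refine Filter.Eventually.of_forall (fun x => ?_)
    have h1 : 1 - y * ∑ j, w j * x j ≤ 1 + |y| * |∑ j, w j * x j| := by
      have := abs_mul y (∑ j, w j * x j)
      have h2 := neg_abs_le (y * ∑ j, w j * x j)
      have h3 := abs_nonneg (y * ∑ j, w j * x j)
      nlinarith [abs_nonneg y, abs_nonneg (∑ j, w j * x j)]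
    have h0 : (0:ℝ) ≤ 1 + |y| * |∑ j, w j * x j| := by positivity
    rw [Real.norm_eq_abs, Real.norm_eq_abs, abs_of_nonneg (le_max_left _ _),
      abs_of_nonneg h0]
    exact max_le h0 h1

/-- Splitting an integral over the joint measure into the two label components. -/
lemma integral_joint {d : ℕ} (ηp ηn : Fin d → Measure ℝ)
    [∀ j, IsProbabilityMeasure (ηp j)] [∀ j, IsProbabilityMeasure (ηn j)]
    (q : ℝ≥0∞) (hq : q ≤ 1) (f : (Fin d → ℝ) × ℝ → ℝ) (hf : Measurable f)
    (h1 : Integrable (fun x => f (x, 1)) (Measure.pi ηp))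
    (h2 : Integrable (fun x => f (x, -1)) (Measure.pi ηn)) :
    ∫ p, f p ∂jointMeasure ηp ηn q
      = q.toReal * ∫ x, f (x, 1) ∂Measure.pi ηp
        + (1 - q).toReal * ∫ x, f (x, -1) ∂Measure.pi ηn := by
  have hq' : q ≠ ∞ := (lt_of_le_of_lt hq ENNReal.one_lt_top).ne
  have hq'' : (1 - q) ≠ ∞ := (lt_of_le_of_lt tsub_le_self ENNReal.one_lt_top).ne
  have hm1 : Measurable (fun x : Fin d → ℝ => (x, (1:ℝ))) :=
    measurable_id.prodMk measurable_const
  have hm2 : Measurable (fun x : Fin d → ℝ => (x, (-1:ℝ))) :=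
    measurable_id.prodMk measurable_const
  have hi1 : Integrable f ((Measure.pi ηp).map (fun x => (x, (1:ℝ)))) :=
    (integrable_map_measure hf.aestronglyMeasurable hm1.aemeasurable).mpr h1
  have hi2 : Integrable f ((Measure.pi ηn).map (fun x => (x, (-1:ℝ)))) :=
    (integrable_map_measure hf.aestronglyMeasurable hm2.aemeasurable).mpr h2
  rw [jointMeasure, integral_add_measure (hi1.smul_measure hq') (hi2.smul_measure hq''),
    integral_smul_measure, integral_smul_measure,
    integral_map hm1.aemeasurable hf.aestronglyMeasurable,
    integral_map hm2.aemeasurable hf.aestronglyMeasurable, smul_eq_mul, smul_eq_mul]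

/-- Key comparison: zeroing out coordinate `i` does not increase the hinge loss component,
provided the sign condition `y * wᵢ * E[xᵢ] ≤ 0` holds. -/
lemma hinge_compare {n : ℕ} (η : Fin (n+1) → Measure ℝ)
    [∀ j, IsProbabilityMeasure (η j)] (hi : ∀ j, Integrable (fun t : ℝ => t) (η j))
    (w : Fin (n+1) → ℝ) (i : Fin (n+1)) (y : ℝ)
    (hsign : y * w i * ∫ t, t ∂η i ≤ 0) :
    ∫ x, max 0 (1 - y * ∑ j, Function.update w i 0 j * x j) ∂Measure.pi η
      ≤ ∫ x, max 0 (1 - y * ∑ j, w j * x j) ∂Measure.pi η := by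
  set w' := Function.update w i 0 with hw'
  set a := w i with ha
  -- sum identity
  have hterm : ∀ x : Fin (n+1) → ℝ, ∀ j,
      w' j * x j = Function.update (fun k => w k * x k) i 0 j := by
    intro x j
    by_cases h : j = i
    · subst h; simp [hw']
    · simp [hw', Function.update_of_ne h]
  have hsum : ∀ x : Fin (n+1) → ℝ,
      ∑ j, w j * x j = (∑ j, w' j * x j) + a * x i := by
    intro x
    have e1 : ∑ j, w' j * x j = 0 + ∑ j ∈ univ \ {i}, w j * x j := by
      rw [Finset.sum_congr rfl (fun j _ => hterm x j)]
      exact Finset.sum_update_of_mem (mem_univ i) (fun k => w k * x k) 0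
    have e2 : ∑ j, w j * x j = (∑ j ∈ univ \ {i}, w j * x j) + w i * x i :=
      Finset.sum_eq_sum_sdiff_singleton_add (mem_univ i) _
    rw [e1, e2, ha, zero_add]
  -- the subgradient weight
  set C : (Fin (n+1) → ℝ) → ℝ :=
    fun x => if 0 < 1 - y * ∑ j, w' j * x j then (1:ℝ) else 0 with hC
  have hCupdate : ∀ x t, C (Function.update x i t) = C x := by
    intro x t
    have : ∑ j, w' j * (Function.update x i t) j = ∑ j, w' j * x j := by
      refine Finset.sum_congr rfl (fun j _ => ?_)
      by_cases h : j = i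
      · subst h; simp [hw']
      · rw [Function.update_of_ne h]
    simp only [hC, this]
  have hCmeas : Measurable C := by
    refine Measurable.ite ?_ measurable_const measurable_const
    exact measurableSet_lt measurable_const (by fun_prop)
  -- integrability facts
  have heval : Integrable (fun x : Fin (n+1) → ℝ => x i) (Measure.pi η) :=
    integrable_comp_eval η i (fun t => t) (hi i)
  have hCx : Integrable (fun x => C x * x i) (Measure.pi η) := by
    refine heval.mono ((hCmeas.mul (measurable_pi_apply i)).aestronglyMeasurable) ?_
    refine Filter.Eventually.of_forall (fun x => ?_)
    rw [Real.norm_eq_abs, Real.norm_eq_abs, abs_mul]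
    have : |C x| ≤ 1 := by
      simp only [hC]
      split <;> simp
    nlinarith [abs_nonneg (x i)]
  have hfw : Integrable (fun x : Fin (n+1) → ℝ => max 0 (1 - y * ∑ j, w j * x j))
      (Measure.pi η) := hinge_integrable η hi w y
  have hfw' : Integrable (fun x : Fin (n+1) → ℝ => max 0 (1 - y * ∑ j, w' j * x j))
      (Measure.pi η) := hinge_integrable η hi w' y
  -- pointwise inequality
  have hpt : ∀ x : Fin (n+1) → ℝ,
      max 0 (1 - y * ∑ j, w' j * x j)
        ≤ max 0 (1 - y * ∑ j, w j * x j) + (y * a) * (C x * x i) := by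
    intro x
    have h0 := hinge_pt (1 - y * ∑ j, w' j * x j) (-(y * (a * x i)))
    have hsx : (1 - y * ∑ j, w' j * x j) + -(y * (a * x i)) = 1 - y * ∑ j, w j * x j := by
      rw [hsum x]; ring
    rw [hsx] at h0
    have : (if 0 < 1 - y * ∑ j, w' j * x j then (1:ℝ) else 0) * (- -(y * (a * x i)))
        = (y * a) * (C x * x i) := by
      simp only [hC]; ring
    rw [this] at h0
    exact h0
  -- integrate
  calc ∫ x, max 0 (1 - y * ∑ j, w' j * x j) ∂Measure.pi η
      ≤ ∫ x, (max 0 (1 - y * ∑ j, w j * x j) + (y * a) * (C x * x i)) ∂Measure.pi η :=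
        integral_mono hfw' (hfw.add (hCx.const_mul (y * a))) hpt
    _ = (∫ x, max 0 (1 - y * ∑ j, w j * x j) ∂Measure.pi η)
          + (y * a) * ∫ x, C x * x i ∂Measure.pi η := by
        rw [integral_add hfw (hCx.const_mul (y * a)), integral_const_mul]
    _ ≤ ∫ x, max 0 (1 - y * ∑ j, w j * x j) ∂Measure.pi η := by
        have hfac : ∫ x, C x * x i ∂Measure.pi η
            = (∫ x, C x ∂Measure.pi η) * ∫ t, t ∂η i :=
          pi_factor η i C (fun t => t) hCupdate
        have hCnn : 0 ≤ ∫ x, C x ∂Measure.pi η := by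
          refine integral_nonneg (fun x => ?_)
          simp only [hC]; split <;> norm_num
        have : (y * a) * ((∫ x, C x ∂Measure.pi η) * ∫ t, t ∂η i)
            = (∫ x, C x ∂Measure.pi η) * (y * a * ∫ t, t ∂η i) := by ring
        rw [hfac, this]
        nlinarith [mul_nonpos_of_nonneg_of_nonpos hCnn hsign]

/-- Main auxiliary lemma: under the sign conditions, `wᵢ* = 0` (else contradiction). -/
lemma svm_aux {n : ℕ} (ηp ηn : Fin (n+1) → Measure ℝ)
    [∀ j, IsProbabilityMeasure (ηp j)] [∀ j, IsProbabilityMeasure (ηn j)]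
    (q : ℝ≥0∞) (hq : q ≤ 1) (lam : ℝ) (hlam : 0 < lam)
    (hip : ∀ j, Integrable (fun t : ℝ => t) (ηp j))
    (hin : ∀ j, Integrable (fun t : ℝ => t) (ηn j))
    (wstar : Fin (n+1) → ℝ)
    (hmin : ∀ w, svmLoss (jointMeasure ηp ηn q) lam wstar ≤
      svmLoss (jointMeasure ηp ηn q) lam w)
    (i : Fin (n+1)) (ha : wstar i ≠ 0)
    (hsp : (1:ℝ) * wstar i * ∫ t, t ∂ηp i ≤ 0)
    (hsn : (-1:ℝ) * wstar i * ∫ t, t ∂ηn i ≤ 0) : False := by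
  set w' := Function.update wstar i 0 with hw'
  have hjoint : ∀ v : Fin (n+1) → ℝ, svmLoss (jointMeasure ηp ηn q) lam v
      = q.toReal * (∫ x, max 0 (1 - (1:ℝ) * ∑ j, v j * x j) ∂Measure.pi ηp)
        + (1 - q).toReal * (∫ x, max 0 (1 - (-1:ℝ) * ∑ j, v j * x j) ∂Measure.pi ηn)
        + lam / 2 * ∑ j, (v j) ^ 2 := by
    intro v
    have hf : Measurable (fun p : (Fin (n+1) → ℝ) × ℝ =>
        max 0 (1 - p.2 * ∑ j, v j * p.1 j)) := by fun_prop
    unfold svmLoss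
    rw [integral_joint ηp ηn q hq _ hf
      (hinge_integrable ηp hip v 1) (hinge_integrable ηn hin v (-1))]
  -- hinge comparisons
  have hIp := hinge_compare ηp hip wstar i 1 hsp
  have hIn := hinge_compare ηn hin wstar i (-1) hsn
  -- regularizer identity
  have hreg : ∑ j, (w' j) ^ 2 = (∑ j, (wstar j) ^ 2) - (wstar i) ^ 2 := by
    have hterm : ∀ j, (w' j) ^ 2 = Function.update (fun k => (wstar k) ^ 2) i 0 j := by
      intro j
      by_cases h : j = i
      · subst h; simp [hw']
      · simp [hw', Function.update_of_ne h]
    have e1 : ∑ j, (w' j) ^ 2 = 0 + ∑ j ∈ univ \ {i}, (wstar j) ^ 2 := by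
      rw [Finset.sum_congr rfl (fun j _ => hterm j)]
      exact Finset.sum_update_of_mem (mem_univ i) (fun k => (wstar k) ^ 2) 0
    have e2 : ∑ j, (wstar j) ^ 2 = (∑ j ∈ univ \ {i}, (wstar j) ^ 2) + (wstar i) ^ 2 :=
      Finset.sum_eq_sum_sdiff_singleton_add (mem_univ i) _
    rw [e1, e2]; ring
  have hlt : svmLoss (jointMeasure ηp ηn q) lam w' < svmLoss (jointMeasure ηp ηn q) lam wstar := by
    rw [hjoint w', hjoint wstar, hreg]
    have h1 : q.toReal * (∫ x, max 0 (1 - (1:ℝ) * ∑ j, w' j * x j) ∂Measure.pi ηp)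
        ≤ q.toReal * (∫ x, max 0 (1 - (1:ℝ) * ∑ j, wstar j * x j) ∂Measure.pi ηp) :=
      mul_le_mul_of_nonneg_left hIp ENNReal.toReal_nonneg
    have h2 : (1 - q).toReal * (∫ x, max 0 (1 - (-1:ℝ) * ∑ j, w' j * x j) ∂Measure.pi ηn)
        ≤ (1 - q).toReal * (∫ x, max 0 (1 - (-1:ℝ) * ∑ j, wstar j * x j) ∂Measure.pi ηn) :=
      mul_le_mul_of_nonneg_left hIn ENNReal.toReal_nonneg
    have h3 : 0 < (wstar i) ^ 2 := by positivity
    nlinarith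
  exact absurd (hmin w') (not_le.mpr hlt)

/-- with features conditionally independent given the label, if feature `i`
satisfies `E[xᵢ|y=-1] ≤ 0 ≤ E[xᵢ|y=1]` then any minimizer `w*` of the regularized soft-SVM
objective has `wᵢ* ≥ 0`; symmetrically, if `E[xᵢ|y=1] ≤ 0 ≤ E[xᵢ|y=-1]` then `wᵢ* ≤ 0`. -/
theorem svm_minimizer_sign {d : ℕ} (ηp ηn : Fin d → Measure ℝ)
    [∀ i, IsProbabilityMeasure (ηp i)] [∀ i, IsProbabilityMeasure (ηn i)]
    (q : ℝ≥0∞) (hq : q ≤ 1) (lam : ℝ) (hlam : 0 < lam)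
    (hip : ∀ j, Integrable (fun t : ℝ => t) (ηp j))
    (hin : ∀ j, Integrable (fun t : ℝ => t) (ηn j))
    (wstar : Fin d → ℝ)
    (hmin : ∀ w, svmLoss (jointMeasure ηp ηn q) lam wstar ≤
      svmLoss (jointMeasure ηp ηn q) lam w)
    (i : Fin d) :
    ((∫ t, t ∂(ηn i)) ≤ 0 ∧ 0 ≤ (∫ t, t ∂(ηp i)) → 0 ≤ wstar i) ∧
    ((∫ t, t ∂(ηp i)) ≤ 0 ∧ 0 ≤ (∫ t, t ∂(ηn i)) → wstar i ≤ 0) := by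
  obtain ⟨n, rfl⟩ : ∃ n, d = n + 1 := ⟨d - 1, (Nat.succ_pred_eq_of_pos i.pos).symm⟩
  constructor
  · rintro ⟨hn, hp⟩
    by_contra h
    have ha : wstar i < 0 := lt_of_not_ge h
    refine svm_aux ηp ηn q hq lam hlam hip hin wstar hmin i (ne_of_lt ha) ?_ ?_
    · rw [one_mul]
      exact mul_nonpos_of_nonpos_of_nonneg ha.le hp
    · nlinarith
  · rintro ⟨hp, hn⟩
    by_contra h
    have ha : 0 < wstar i := lt_of_not_ge h
    refine svm_aux ηp ηn q hq lam hlam hip hin wstar hmin i (ne_of_gt ha) ?_ ?_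
    · rw [one_mul]
      exact mul_nonpos_of_nonneg_of_nonpos ha.le hp
    · nlinarith
end

section
/- If features are conditionally independent given the label and feature i satisfies E[xᵢ | y=-1] = E[xᵢ | y=1] = 0, then any minimizer w* of the regularized soft-SVM objective has wᵢ* = 0. -/
open MeasureTheory Finset
open scoped ENNReal

lemma integrable_eval {m : ℕ} (η : Fin m → Measure ℝ) [∀ j, IsProbabilityMeasure (η j)]
    (j : Fin m) (hj : Integrable (fun t : ℝ => t) (η j)) :
    Integrable (fun x : Fin m → ℝ => x j) (Measure.pi η) := by
  cases m with
  | zero => exact j.elim0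
  | succ n =>
    have hp := measurePreserving_piFinSuccAbove η j
    have hg : Integrable (fun z : ℝ × (Fin n → ℝ) => z.1)
        ((η j).prod (Measure.pi fun k => η (j.succAbove k))) := by
      simpa using hj.mul_prod (integrable_const (1 : ℝ))
    have h2 : Integrable ((fun z : ℝ × (Fin n → ℝ) => z.1) ∘
        (MeasurableEquiv.piFinSuccAbove (fun _ => ℝ) j)) (Measure.pi η) := by
      rw [← (MeasurableEquiv.piFinSuccAbove (fun _ => ℝ) j).measurableEmbedding.integrable_map_iff,
        hp.map_eq]
      exact hg
    exact h2

lemma integrable_linsum {m : ℕ} (η : Fin m → Measure ℝ) [∀ j, IsProbabilityMeasure (η j)]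
    (hint : ∀ j, Integrable (fun t : ℝ => t) (η j)) (w : Fin m → ℝ) :
    Integrable (fun x : Fin m → ℝ => ∑ j, w j * x j) (Measure.pi η) :=
  integrable_finset_sum _ fun j _ => (integrable_eval η j (hint j)).const_mul (w j)

lemma integrable_hinge {m : ℕ} (η : Fin m → Measure ℝ) [∀ j, IsProbabilityMeasure (η j)]
    (hint : ∀ j, Integrable (fun t : ℝ => t) (η j)) (c : ℝ) (w : Fin m → ℝ) :
    Integrable (fun x : Fin m → ℝ => max 0 (1 - c * ∑ j, w j * x j)) (Measure.pi η) := by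
  have h1 : Integrable (fun x : Fin m → ℝ => 1 - c * ∑ j, w j * x j) (Measure.pi η) :=
    (integrable_const 1).sub ((integrable_linsum η hint w).const_mul c)
  simpa [max_comm] using h1.pos_part


lemma hinge_update_le {n : ℕ} (η : Fin (n + 1) → Measure ℝ) [∀ j, IsProbabilityMeasure (η j)]
    (hint : ∀ j, Integrable (fun t : ℝ => t) (η j)) (c : ℝ) (w : Fin (n + 1) → ℝ)
    (i : Fin (n + 1)) (hmean : (∫ t, t ∂(η i)) = 0) :
    ∫ x, max 0 (1 - c * ∑ j, Function.update w i 0 j * x j) ∂(Measure.pi η)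
      ≤ ∫ x, max 0 (1 - c * ∑ j, w j * x j) ∂(Measure.pi η) := by
  set e := MeasurableEquiv.piFinSuccAbove (fun _ : Fin (n + 1) => ℝ) i with he
  set ν := Measure.pi (fun k : Fin n => η (i.succAbove k)) with hν
  have hp := measurePreserving_piFinSuccAbove η i
  set S : (Fin n → ℝ) → ℝ := fun a => ∑ k, w (i.succAbove k) * a k with hS
  set G : ℝ × (Fin n → ℝ) → ℝ := fun z => max 0 (1 - c * (w i * z.1 + S z.2)) with hG
  set G' : ℝ × (Fin n → ℝ) → ℝ := fun z => max 0 (1 - c * S z.2) with hG'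
  -- pointwise identifications
  have hsum : ∀ x : Fin (n + 1) → ℝ, ∑ j, w j * x j = w i * x i + S (fun k => x (i.succAbove k)) :=
    fun x => Fin.sum_univ_succAbove (fun j => w j * x j) i
  have hsum' : ∀ x : Fin (n + 1) → ℝ,
      ∑ j, Function.update w i 0 j * x j = S (fun k => x (i.succAbove k)) := by
    intro x
    rw [Fin.sum_univ_succAbove (fun j => Function.update w i 0 j * x j) i]
    simp only [Function.update_self, zero_mul, zero_add, hS]
    exact Finset.sum_congr rfl fun k _ => by
      rw [Function.update_of_ne (Fin.succAbove_ne i k)]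
  have heG : ∀ x : Fin (n + 1) → ℝ, G (e x) = max 0 (1 - c * ∑ j, w j * x j) := by
    intro x; rw [hsum x]; rfl
  have heG' : ∀ x : Fin (n + 1) → ℝ,
      G' (e x) = max 0 (1 - c * ∑ j, Function.update w i 0 j * x j) := by
    intro x; rw [hsum' x]; rfl
  -- integrability
  have hIw : Integrable (fun x : Fin (n + 1) → ℝ => max 0 (1 - c * ∑ j, w j * x j))
      (Measure.pi η) := integrable_hinge η hint c w
  have hIw' : Integrable
      (fun x : Fin (n + 1) → ℝ => max 0 (1 - c * ∑ j, Function.update w i 0 j * x j))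
      (Measure.pi η) := integrable_hinge η hint c _
  have hGint : Integrable G ((η i).prod ν) := by
    rw [← hp.map_eq, e.measurableEmbedding.integrable_map_iff]
    exact hIw.congr (Filter.Eventually.of_forall fun x => (heG x).symm)
  have hG'int : Integrable G' ((η i).prod ν) := by
    rw [← hp.map_eq, e.measurableEmbedding.integrable_map_iff]
    exact hIw'.congr (Filter.Eventually.of_forall fun x => (heG' x).symm)
  -- rewrite both sides as integrals over the product measure
  have hR : ∫ z, G z ∂((η i).prod ν) = ∫ x, max 0 (1 - c * ∑ j, w j * x j) ∂(Measure.pi η) := by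
    rw [← hp.integral_comp e.measurableEmbedding G]
    exact integral_congr_ae (Filter.Eventually.of_forall heG)
  have hL : ∫ z, G' z ∂((η i).prod ν)
      = ∫ x, max 0 (1 - c * ∑ j, Function.update w i 0 j * x j) ∂(Measure.pi η) := by
    rw [← hp.integral_comp e.measurableEmbedding G']
    exact integral_congr_ae (Filter.Eventually.of_forall heG')
  rw [← hR, ← hL, integral_prod_symm G hGint, integral_prod_symm G' hG'int]
  -- compare the inner integrals pointwise
  apply integral_mono (hG'int.integral_prod_right) (hGint.integral_prod_right)
  intro b
  have h1 : Integrable (fun t : ℝ => w i * t + S b) (η i) :=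
    ((hint i).const_mul (w i)).add (integrable_const _)
  have h2 : Integrable (fun t : ℝ => 1 - c * (w i * t + S b)) (η i) :=
    (integrable_const 1).sub (h1.const_mul c)
  have e1 : ∫ t, c * (w i * t + S b) ∂(η i) = c * S b := by
    rw [integral_const_mul, integral_add ((hint i).const_mul (w i)) (integrable_const _),
      integral_const_mul, hmean, integral_const]
    simp
  have hval : ∫ t, (1 - c * (w i * t + S b)) ∂(η i) = 1 - c * S b := by
    rw [integral_sub (integrable_const 1) (h1.const_mul c), e1, integral_const]
    simp
  have hmax : Integrable (fun t : ℝ => max 0 (1 - c * (w i * t + S b))) (η i) := by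
    simpa [max_comm] using h2.pos_part
  have hnn : (0 : ℝ) ≤ ∫ t, G (t, b) ∂(η i) :=
    integral_nonneg fun t => le_max_left _ _
  have hge : 1 - c * S b ≤ ∫ t, G (t, b) ∂(η i) := by
    rw [← hval]
    exact integral_mono h2 hmax fun t => le_max_right _ _
  have hconst : (∫ x : ℝ, G' (x, b) ∂(η i)) = max 0 (1 - c * S b) := by
    simp [hG']
  dsimp only
  rw [hconst]
  exact max_le hnn hge

lemma hinge_cont {d : ℕ} (w : Fin d → ℝ) :
    Continuous (fun p : (Fin d → ℝ) × ℝ => max 0 (1 - p.2 * ∑ j, w j * p.1 j)) := by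
  apply continuous_const.max
  apply continuous_const.sub
  exact continuous_snd.mul (continuous_finset_sum _ fun j _ =>
    (continuous_const.mul ((continuous_apply j).comp continuous_fst)))

lemma joint_hinge {d : ℕ} (ηp ηn : Fin d → Measure ℝ)
    [∀ j, IsProbabilityMeasure (ηp j)] [∀ j, IsProbabilityMeasure (ηn j)]
    (q : ℝ≥0∞) (hq : q ≤ 1)
    (hip : ∀ j, Integrable (fun t : ℝ => t) (ηp j))
    (hin : ∀ j, Integrable (fun t : ℝ => t) (ηn j)) (w : Fin d → ℝ) :
    ∫ p, max 0 (1 - p.2 * ∑ j, w j * p.1 j) ∂(jointMeasure ηp ηn q)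
      = q.toReal * (∫ x, max 0 (1 - 1 * ∑ j, w j * x j) ∂(Measure.pi ηp))
        + (1 - q).toReal * (∫ x, max 0 (1 - (-1) * ∑ j, w j * x j) ∂(Measure.pi ηn)) := by
  have hqne : q ≠ ∞ := (lt_of_le_of_lt hq ENNReal.one_lt_top).ne
  have hqne' : 1 - q ≠ ∞ := (lt_of_le_of_lt tsub_le_self ENNReal.one_lt_top).ne
  have hFc := hinge_cont w
  have hmp : Measurable (fun x : Fin d → ℝ => (x, (1 : ℝ))) :=
    measurable_id.prodMk measurable_const
  have hmn : Measurable (fun x : Fin d → ℝ => (x, (-1 : ℝ))) :=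
    measurable_id.prodMk measurable_const
  have hIp : Integrable (fun p : (Fin d → ℝ) × ℝ => max 0 (1 - p.2 * ∑ j, w j * p.1 j))
      ((Measure.pi ηp).map (fun x => (x, (1 : ℝ)))) := by
    rw [integrable_map_measure hFc.aestronglyMeasurable hmp.aemeasurable]
    exact integrable_hinge ηp hip 1 w
  have hIn : Integrable (fun p : (Fin d → ℝ) × ℝ => max 0 (1 - p.2 * ∑ j, w j * p.1 j))
      ((Measure.pi ηn).map (fun x => (x, (-1 : ℝ)))) := by
    rw [integrable_map_measure hFc.aestronglyMeasurable hmn.aemeasurable]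
    exact integrable_hinge ηn hin (-1) w
  rw [jointMeasure, integral_add_measure (hIp.smul_measure hqne) (hIn.smul_measure hqne'),
    integral_smul_measure, integral_smul_measure,
    integral_map hmp.aemeasurable hFc.aestronglyMeasurable,
    integral_map hmn.aemeasurable hFc.aestronglyMeasurable]
  simp [smul_eq_mul]

/-- with features conditionally independent given the label, if feature `i`
satisfies `E[xᵢ|y=-1] = E[xᵢ|y=1] = 0`, then any minimizer `w*` of the regularized soft-SVM
objective has `wᵢ* = 0`. -/
theorem svm_minimizer_zero_mean_feature {d : ℕ} (ηp ηn : Fin d → Measure ℝ)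
    [∀ i, IsProbabilityMeasure (ηp i)] [∀ i, IsProbabilityMeasure (ηn i)]
    (q : ℝ≥0∞) (hq : q ≤ 1) (lam : ℝ) (hlam : 0 < lam)
    (hip : ∀ j, Integrable (fun t : ℝ => t) (ηp j))
    (hin : ∀ j, Integrable (fun t : ℝ => t) (ηn j))
    (wstar : Fin d → ℝ)
    (hmin : ∀ w, svmLoss (jointMeasure ηp ηn q) lam wstar ≤
      svmLoss (jointMeasure ηp ηn q) lam w)
    (i : Fin d)
    (hmeanp : (∫ t, t ∂(ηp i)) = 0) (hmeann : (∫ t, t ∂(ηn i)) = 0) :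
    wstar i = 0 := by
  cases d with
  | zero => exact i.elim0
  | succ n =>
  set w' := Function.update wstar i 0 with hw'
  -- the hinge part does not increase when zeroing out coordinate i
  have hJ : ∫ p, max 0 (1 - p.2 * ∑ j, w' j * p.1 j) ∂(jointMeasure ηp ηn q)
      ≤ ∫ p, max 0 (1 - p.2 * ∑ j, wstar j * p.1 j) ∂(jointMeasure ηp ηn q) := by
    rw [joint_hinge ηp ηn q hq hip hin, joint_hinge ηp ηn q hq hip hin]
    exact add_le_add
      (mul_le_mul_of_nonneg_left (hinge_update_le ηp hip 1 wstar i hmeanp) ENNReal.toReal_nonneg)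
      (mul_le_mul_of_nonneg_left (hinge_update_le ηn hin (-1) wstar i hmeann)
        ENNReal.toReal_nonneg)
  -- the regularizer decreases by (lam/2) * (wstar i)^2
  have hsq : ∑ j, (w' j) ^ 2 = ∑ j, (wstar j) ^ 2 - (wstar i) ^ 2 := by
    have h1 : ∀ j, (w' j) ^ 2 = Function.update (fun j => (wstar j) ^ 2) i 0 j := by
      intro j
      by_cases hj : j = i
      · subst hj; simp [hw']
      · simp [hw', Function.update_of_ne hj]
    rw [Finset.sum_congr rfl fun j _ => h1 j,
      Finset.sum_update_of_mem (Finset.mem_univ i),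
      Finset.sum_eq_sum_sdiff_singleton_add (Finset.mem_univ i) (fun j => (wstar j) ^ 2)]
    ring
  have hloss := hmin w'
  simp only [svmLoss] at hloss
  rw [hsq] at hloss
  have h2 : (wstar i) ^ 2 ≤ 0 := by nlinarith
  have h3 : (wstar i) ^ 2 = 0 := le_antisymm h2 (sq_nonneg _)
  exact pow_eq_zero_iff two_ne_zero |>.mp h3
end

section
/- In the SLAR game, a pure-strategy Nash equilibrium exists. Concretely, let δ*(x,y) shift each robust feature i (having |μᵢ| > ε, say μᵢ > 0) by -yε and each non-robust feature j (|μⱼ| ≤ ε) by -yμⱼ, and let w* be the unique minimizer of the regularized SVM objective on the perturbed distribution. Then (δ*, w*) is a Nash equilibrium. -/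
open MeasureTheory Finset
open scoped ENNReal

/-- The payoff of the SLAR game. -/
noncomputable def slarPayoff {d : ℕ} (μ : Measure ((Fin d → ℝ) × ℝ)) (lam : ℝ)
    (δ : (Fin d → ℝ) × ℝ → Fin d → ℝ) (w : Fin d → ℝ) : ℝ :=
  (∫ p, max 0 (1 - p.2 * ∑ i, w i * (p.1 i + δ p i)) ∂μ) + lam / 2 * ∑ i, (w i) ^ 2

/-- The equilibrium perturbation: shift each robust feature (with `μᵢ > ε`) by `-yε` and each
non-robust feature (with `|μᵢ| ≤ ε`) by `-yμᵢ` (written with `sign y`, which equals `y` on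
the labels `±1`). -/
noncomputable def eqPerturbation {d : ℕ} (μv : Fin d → ℝ) (ε : ℝ)
    (p : (Fin d → ℝ) × ℝ) : Fin d → ℝ :=
  fun i => if ε < |μv i| then -Real.sign p.2 * ε else -Real.sign p.2 * μv i

section NashAux
open Function


lemma measurable_realSign : Measurable Real.sign := by
  have : Real.sign = fun r : ℝ => if r < 0 then (-1:ℝ) else if 0 < r then 1 else 0 := rfl
  rw [this]
  exact Measurable.ite measurableSet_Iio measurable_const
    (Measurable.ite measurableSet_Ioi measurable_const measurable_const)

variable {d : ℕ}

lemma integrable_coord (η : Fin d → Measure ℝ) [∀ j, IsProbabilityMeasure (η j)]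
    (hη : ∀ j, Integrable (fun t : ℝ => t) (η j)) (j : Fin d) :
    Integrable (fun x : Fin d → ℝ => x j) (Measure.pi η) := by
  cases d with
  | zero => exact j.elim0
  | succ n =>
    have mp := measurePreserving_piFinSuccAbove η j
    have he : (fun x : Fin (n+1) → ℝ => x j)
        = (fun p : ℝ × (Fin n → ℝ) => p.1) ∘ (MeasurableEquiv.piFinSuccAbove (fun _ => ℝ) j) := by
      funext x; simp [MeasurableEquiv.piFinSuccAbove]; rfl
    rw [he, mp.integrable_comp (by fun_prop)]
    have hmap : ((η j).prod (Measure.pi fun k => η (j.succAbove k))).map Prod.fst = η j := by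
      rw [Measure.map_fst_prod, measure_univ, one_smul]
    have h2 : (fun p : ℝ × (Fin n → ℝ) => p.1) = (fun t : ℝ => t) ∘ Prod.fst := rfl
    rw [h2, ← integrable_map_measure (by rw [hmap]; exact (hη j).aestronglyMeasurable)
      measurable_fst.aemeasurable, hmap]
    exact hη j

lemma integrable_of_hinge_bound (η : Fin d → Measure ℝ) [∀ j, IsProbabilityMeasure (η j)]
    (hη : ∀ j, Integrable (fun t : ℝ => t) (η j)) {f : (Fin d → ℝ) → ℝ}
    (hf : AEStronglyMeasurable f (Measure.pi η)) (C : ℝ) (w : Fin d → ℝ)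
    (hb : ∀ x, |f x| ≤ C + ∑ j, |w j| * |x j|) :
    Integrable f (Measure.pi η) := by
  have hg : Integrable (fun x : Fin d → ℝ => |C| + ∑ j, |w j| * |x j|) (Measure.pi η) :=
    (integrable_const _).add (integrable_finset_sum _ fun j _ =>
      ((integrable_coord η hη j).abs.const_mul _))
  refine hg.mono hf ?_
  filter_upwards with x
  have h1 : |f x| ≤ |C| + ∑ j, |w j| * |x j| :=
    le_trans (hb x) (by gcongr; exact le_abs_self C)
  have h2 : (0:ℝ) ≤ |C| + ∑ j, |w j| * |x j| := by positivity
  simpa [Real.norm_eq_abs, abs_of_nonneg h2] using h1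

lemma max_integral_le (μ0 : Measure ℝ) [IsProbabilityMeasure μ0]
    (h0 : Integrable (fun t : ℝ => t) μ0) (c v : ℝ) :
    max 0 (c + v * ∫ t, t ∂μ0) ≤ ∫ t, max 0 (c + v * t) ∂μ0 := by
  have h1 : Integrable (fun t : ℝ => c + v * t) μ0 := (integrable_const c).add (h0.const_mul v)
  have h2 : Integrable (fun t : ℝ => max 0 (c + v * t)) μ0 := (integrable_const (0:ℝ)).sup h1
  refine max_le (integral_nonneg fun t => le_max_left _ _) ?_
  have h3 : c + v * ∫ t, t ∂μ0 = ∫ t, (c + v * t) ∂μ0 := by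
    rw [integral_add (integrable_const c) (h0.const_mul v), integral_const, MeasureTheory.integral_const_mul]
    simp
  rw [h3]
  exact integral_mono h1 h2 fun t => le_max_right _ _

lemma integrable_insertNth {n : ℕ} (η : Fin (n+1) → Measure ℝ) [∀ j, IsProbabilityMeasure (η j)]
    (i : Fin (n+1)) {f : (Fin (n+1) → ℝ) → ℝ} (hf : Integrable f (Measure.pi η)) :
    Integrable (fun p : ℝ × (Fin n → ℝ) => f (Fin.insertNth i p.1 p.2))
      ((η i).prod (Measure.pi fun k => η (i.succAbove k))) := by
  have mp := (measurePreserving_piFinSuccAbove η i).symm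
  have h := (mp.integrable_comp (g := f) hf.aestronglyMeasurable).mpr hf
  have he : (f ∘ ⇑(MeasurableEquiv.piFinSuccAbove (fun _ => ℝ) i).symm)
      = fun p : ℝ × (Fin n → ℝ) => f (Fin.insertNth i p.1 p.2) := by
    funext p; simp [MeasurableEquiv.piFinSuccAbove, Fin.insertNthEquiv]
  rwa [he] at h

lemma pi_succAbove_integral {n : ℕ} (η : Fin (n+1) → Measure ℝ)
    [∀ j, IsProbabilityMeasure (η j)]
    (i : Fin (n+1)) {f : (Fin (n+1) → ℝ) → ℝ} (hf : Integrable f (Measure.pi η)) :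
    ∫ x, f x ∂Measure.pi η
      = ∫ r, ∫ t, f (Fin.insertNth (α := fun _ => ℝ) i t r) ∂η i ∂Measure.pi (fun k => η (i.succAbove k)) := by
  have mp := (measurePreserving_piFinSuccAbove η i).symm
  have h1 := mp.integral_comp (MeasurableEquiv.piFinSuccAbove (fun _ => ℝ) i).symm.measurableEmbedding f
  have he : (fun p : ℝ × (Fin n → ℝ) => f ((MeasurableEquiv.piFinSuccAbove (fun _ => ℝ) i).symm p))
      = fun p : ℝ × (Fin n → ℝ) => f (Fin.insertNth i p.1 p.2) := by
    funext p; simp [MeasurableEquiv.piFinSuccAbove, Fin.insertNthEquiv]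
  rw [← h1, he] at *
  exact MeasureTheory.integral_prod_symm _ (integrable_insertNth η i hf)

lemma hinge_abs_bound {d : ℕ} (c : ℝ) (w x : Fin d → ℝ) :
    |max 0 (c + ∑ j, w j * x j)| ≤ |c| + ∑ j, |w j| * |x j| := by
  rw [abs_of_nonneg (le_max_left _ _)]
  refine max_le (by positivity) ?_
  calc c + ∑ j, w j * x j ≤ |c + ∑ j, w j * x j| := le_abs_self _
    _ ≤ |c| + |∑ j, w j * x j| := abs_add_le _ _
    _ ≤ |c| + ∑ j, |w j * x j| := by gcongr; exact Finset.abs_sum_le_sum_abs _ _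
    _ = |c| + ∑ j, |w j| * |x j| := by simp [abs_mul]

lemma measurable_hingeFun {d : ℕ} (c : ℝ) (w : Fin d → ℝ) :
    Measurable (fun x : Fin d → ℝ => max 0 (c + ∑ j, w j * x j)) :=
  measurable_const.max (measurable_const.add
    (Finset.measurable_sum _ fun j _ => by fun_prop))

lemma integrable_hingeFun {d : ℕ} (η : Fin d → Measure ℝ) [∀ j, IsProbabilityMeasure (η j)]
    (hη : ∀ j, Integrable (fun t : ℝ => t) (η j)) (c : ℝ) (w : Fin d → ℝ) :
    Integrable (fun x : Fin d → ℝ => max 0 (c + ∑ j, w j * x j)) (Measure.pi η) :=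
  integrable_of_hinge_bound η hη (measurable_hingeFun c w).aestronglyMeasurable |c| w
    (fun x => hinge_abs_bound c w x)

lemma key_pi {n : ℕ} (η : Fin (n+1) → Measure ℝ) [∀ j, IsProbabilityMeasure (η j)]
    (hη : ∀ j, Integrable (fun t : ℝ => t) (η j)) (w : Fin (n+1) → ℝ) (c₀ c₁ : ℝ)
    (i : Fin (n+1)) (hc : c₀ ≤ c₁ + w i * ∫ t, t ∂η i) :
    ∫ x, max 0 (c₀ + ∑ j, Function.update w i 0 j * x j) ∂Measure.pi η
      ≤ ∫ x, max 0 (c₁ + ∑ j, w j * x j) ∂Measure.pi η := by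
  set ν := Measure.pi (fun k => η (i.succAbove k)) with hν
  have hint₁ : Integrable (fun x : Fin (n+1) → ℝ => max 0 (c₁ + ∑ j, w j * x j))
      (Measure.pi η) := integrable_hingeFun η hη c₁ w
  have hint₀ : Integrable (fun x : Fin (n+1) → ℝ => max 0 (c₀ + ∑ j, Function.update w i 0 j * x j))
      (Measure.pi η) := integrable_hingeFun η hη c₀ _
  rw [pi_succAbove_integral η i hint₀, pi_succAbove_integral η i hint₁]
  -- rewrite inner sums
  have hsum : ∀ (v : Fin (n+1) → ℝ) (t : ℝ) (r : Fin n → ℝ),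
      ∑ j, v j * (Fin.insertNth (α := fun _ => ℝ) i t r) j = v i * t + ∑ k, v (i.succAbove k) * r k := by
    intro v t r
    rw [Fin.sum_univ_succAbove (fun j => v j * (Fin.insertNth (α := fun _ => ℝ) i t r) j) i]
    simp
  have hupd : ∀ k, Function.update w i 0 (i.succAbove k) = w (i.succAbove k) := fun k =>
    Function.update_of_ne (Fin.succAbove_ne i k) _ _
  -- pointwise comparison of the outer integrands
  refine integral_mono ?_ ?_ ?_
  · -- integrable: LHS outer function
    have : (fun r : Fin n → ℝ => ∫ t, max 0 (c₀ + ∑ j, Function.update w i 0 j * (Fin.insertNth (α := fun _ => ℝ) i t r) j) ∂η i)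
        = fun r => max 0 (c₀ + ∑ k, w (i.succAbove k) * r k) := by
      funext r
      have : ∀ t : ℝ, max 0 (c₀ + ∑ j, Function.update w i 0 j * (Fin.insertNth (α := fun _ => ℝ) i t r) j)
          = max 0 (c₀ + ∑ k, w (i.succAbove k) * r k) := by
        intro t; rw [hsum]; simp [hupd]
      simp only [this, integral_const, measure_univ, probReal_univ, one_smul]
    rw [this]
    exact integrable_hingeFun _ (fun k => hη _) c₀ _
  · -- integrable: RHS outer function
    exact (integrable_insertNth η i hint₁).integral_prod_right
  · intro r
    -- LHS value
    have hL : (∫ t, max 0 (c₀ + ∑ j, Function.update w i 0 j * (Fin.insertNth (α := fun _ => ℝ) i t r) j) ∂η i)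
        = max 0 (c₀ + ∑ k, w (i.succAbove k) * r k) := by
      have : ∀ t : ℝ, max 0 (c₀ + ∑ j, Function.update w i 0 j * (Fin.insertNth (α := fun _ => ℝ) i t r) j)
          = max 0 (c₀ + ∑ k, w (i.succAbove k) * r k) := by
        intro t; rw [hsum]; simp [hupd]
      simp only [this, integral_const, measure_univ, probReal_univ, one_smul]
    dsimp only
    rw [hL]
    have hR : ∀ t : ℝ, max 0 (c₁ + ∑ j, w j * (Fin.insertNth (α := fun _ => ℝ) i t r) j)
        = max 0 ((c₁ + ∑ k, w (i.succAbove k) * r k) + w i * t) := by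
      intro t; rw [hsum]; ring_nf
    calc max 0 (c₀ + ∑ k, w (i.succAbove k) * r k)
        ≤ max 0 ((c₁ + ∑ k, w (i.succAbove k) * r k) + w i * ∫ t, t ∂η i) := by
          apply max_le_max le_rfl; linarith
      _ ≤ ∫ t, max 0 ((c₁ + ∑ k, w (i.succAbove k) * r k) + w i * t) ∂η i :=
          max_integral_le (η i) (hη i) _ _
      _ = ∫ t, max 0 (c₁ + ∑ j, w j * (Fin.insertNth (α := fun _ => ℝ) i t r) j) ∂η i := by
          simp only [hR]

lemma joint_integral {d : ℕ} (ηp ηn : Fin d → Measure ℝ)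
    [∀ i, IsProbabilityMeasure (ηp i)] [∀ i, IsProbabilityMeasure (ηn i)]
    (q : ℝ≥0∞) (hq : q ≤ 1) {F : (Fin d → ℝ) × ℝ → ℝ} (hF : Measurable F)
    (h1 : Integrable (fun x => F (x, 1)) (Measure.pi ηp))
    (h2 : Integrable (fun x => F (x, -1)) (Measure.pi ηn)) :
    ∫ p, F p ∂jointMeasure ηp ηn q
      = q.toReal * ∫ x, F (x, 1) ∂Measure.pi ηp
        + (1-q).toReal * ∫ x, F (x, -1) ∂Measure.pi ηn := by
  have m1 : Measurable (fun x : Fin d → ℝ => (x, (1:ℝ))) := measurable_id.prodMk measurable_const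
  have m2 : Measurable (fun x : Fin d → ℝ => (x, (-1:ℝ))) := measurable_id.prodMk measurable_const
  have hq1 : q ≠ ⊤ := (hq.trans_lt ENNReal.one_lt_top).ne
  have hq2 : (1 - q) ≠ ⊤ := ((tsub_le_self.trans le_rfl).trans_lt ENNReal.one_lt_top).ne
  have i1 : Integrable F ((Measure.pi ηp).map (fun x => (x, (1:ℝ)))) :=
    (integrable_map_measure hF.aestronglyMeasurable m1.aemeasurable).2 h1
  have i2 : Integrable F ((Measure.pi ηn).map (fun x => (x, (-1:ℝ)))) :=
    (integrable_map_measure hF.aestronglyMeasurable m2.aemeasurable).2 h2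
  rw [jointMeasure, integral_add_measure (i1.smul_measure hq1) (i2.smul_measure hq2),
    integral_smul_measure, integral_smul_measure,
    integral_map m1.aemeasurable hF.aestronglyMeasurable,
    integral_map m2.aemeasurable hF.aestronglyMeasurable]
  simp [smul_eq_mul]

noncomputable def avec {d : ℕ} (μv : Fin d → ℝ) (ε : ℝ) : Fin d → ℝ :=
  fun i => if ε < |μv i| then ε else μv i

lemma eqPert_pos {d : ℕ} (μv : Fin d → ℝ) (ε : ℝ) (x : Fin d → ℝ) (j : Fin d) :
    eqPerturbation μv ε (x, 1) j = -(avec μv ε j) := by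
  simp only [eqPerturbation, avec]; split_ifs <;> simp [Real.sign_one]

lemma eqPert_neg {d : ℕ} (μv : Fin d → ℝ) (ε : ℝ) (x : Fin d → ℝ) (j : Fin d) :
    eqPerturbation μv ε (x, -1) j = avec μv ε j := by
  have hs : Real.sign (-1 : ℝ) = -1 := Real.sign_of_neg (by norm_num)
  simp only [eqPerturbation, avec]; split_ifs <;> simp [hs]

lemma eqPert_bound {d : ℕ} (μv : Fin d → ℝ) (ε : ℝ) (hε : 0 ≤ ε) :
    ∀ (p : (Fin d → ℝ) × ℝ) (i : Fin d), |eqPerturbation μv ε p i| ≤ ε := by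
  intro p i
  have hs : |Real.sign p.2| ≤ 1 := by
    rcases Real.sign_apply_eq p.2 with h | h | h <;> simp [h]
  unfold eqPerturbation
  split_ifs with h
  · rw [neg_mul, abs_neg, abs_mul]
    calc |Real.sign p.2| * |ε| ≤ 1 * |ε| := by gcongr
      _ = ε := by rw [one_mul, abs_of_nonneg hε]
  · push_neg at h
    rw [neg_mul, abs_neg, abs_mul]
    calc |Real.sign p.2| * |μv i| ≤ 1 * ε := mul_le_mul hs h (abs_nonneg _) one_pos.le
      _ = ε := one_mul ε

lemma measurable_eqPerturbation {d : ℕ} (μv : Fin d → ℝ) (ε : ℝ) :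
    Measurable (eqPerturbation μv ε (d := d)) := by
  apply measurable_pi_lambda
  intro i
  unfold eqPerturbation
  split_ifs with h
  · exact ((measurable_realSign.comp measurable_snd).neg).mul_const _
  · exact ((measurable_realSign.comp measurable_snd).neg).mul_const _

lemma measurable_hinge_integrand {d : ℕ} (w : Fin d → ℝ)
    (δ : (Fin d → ℝ) × ℝ → Fin d → ℝ) (hδ : Measurable δ) :
    Measurable (fun p : (Fin d → ℝ) × ℝ => max 0 (1 - p.2 * ∑ i, w i * (p.1 i + δ p i))) := by
  refine measurable_const.max (measurable_const.sub (measurable_snd.mul ?_))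
  refine Finset.measurable_sum _ fun i _ => ?_
  exact (((measurable_pi_apply i).comp measurable_fst).add
    ((measurable_pi_apply i).comp hδ)).const_mul (w i)

lemma integrable_hinge_label {d : ℕ} (η : Fin d → Measure ℝ) [∀ j, IsProbabilityMeasure (η j)]
    (hη : ∀ j, Integrable (fun t : ℝ => t) (η j)) (w : Fin d → ℝ) (ε : ℝ) (hε : 0 ≤ ε)
    (y : ℝ) (hy : |y| = 1)
    (δ : (Fin d → ℝ) × ℝ → Fin d → ℝ) (hδ : Measurable δ) (hδb : ∀ p i, |δ p i| ≤ ε) :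
    Integrable (fun x => max 0 (1 - y * ∑ i, w i * (x i + δ (x, y) i))) (Measure.pi η) := by
  have hm : Measurable (fun x : Fin d → ℝ => max 0 (1 - y * ∑ i, w i * (x i + δ (x, y) i))) := by
    have : (fun x : Fin d → ℝ => max 0 (1 - y * ∑ i, w i * (x i + δ (x, y) i)))
        = (fun p : (Fin d → ℝ) × ℝ => max 0 (1 - p.2 * ∑ i, w i * (p.1 i + δ p i)))
          ∘ (fun x => (x, y)) := rfl
    rw [this]
    exact (measurable_hinge_integrand w δ hδ).comp (measurable_id.prodMk measurable_const)
  refine integrable_of_hinge_bound η hη hm.aestronglyMeasurable (1 + ∑ j, |w j| * ε) w ?_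
  intro x
  rw [abs_of_nonneg (le_max_left _ _)]
  refine max_le (add_nonneg (add_nonneg one_pos.le (Finset.sum_nonneg fun j _ =>
    mul_nonneg (abs_nonneg _) hε)) (Finset.sum_nonneg fun j _ =>
    mul_nonneg (abs_nonneg _) (abs_nonneg _))) ?_
  have hS : |∑ i, w i * (x i + δ (x, y) i)| ≤ ∑ i, |w i| * (|x i| + ε) := by
    refine le_trans (Finset.abs_sum_le_sum_abs _ _) (Finset.sum_le_sum fun i _ => ?_)
    rw [abs_mul]
    gcongr
    exact le_trans (abs_add_le _ _) (by gcongr; exact hδb _ i)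
  calc 1 - y * ∑ i, w i * (x i + δ (x, y) i)
      ≤ |1 - y * ∑ i, w i * (x i + δ (x, y) i)| := le_abs_self _
    _ ≤ 1 + |y| * |∑ i, w i * (x i + δ (x, y) i)| := by
        refine le_trans (abs_sub _ _) ?_
        simp [abs_mul]
    _ = 1 + |∑ i, w i * (x i + δ (x, y) i)| := by rw [hy, one_mul]
    _ ≤ 1 + ∑ i, |w i| * (|x i| + ε) := by linarith
    _ = 1 + ∑ j, |w j| * ε + ∑ j, |w j| * |x j| := by
        rw [add_assoc]
        congr 1
        rw [← Finset.sum_add_distrib]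
        refine Finset.sum_congr rfl fun i _ => by ring

lemma hinge_update_le_s12 {d : ℕ} (ηp ηn : Fin d → Measure ℝ)
    [∀ i, IsProbabilityMeasure (ηp i)] [∀ i, IsProbabilityMeasure (ηn i)]
    (q : ℝ≥0∞) (hq : q ≤ 1) (ε : ℝ) (hε : 0 ≤ ε) (μv : Fin d → ℝ)
    (hip : ∀ j, Integrable (fun t : ℝ => t) (ηp j))
    (hin : ∀ j, Integrable (fun t : ℝ => t) (ηn j))
    (hmeanp : ∀ i, (∫ t, t ∂(ηp i)) = μv i)
    (hmeann : ∀ i, (∫ t, t ∂(ηn i)) = -(μv i))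
    (w : Fin d → ℝ) (i : Fin d) (hcond : 0 ≤ w i * (avec μv ε i - μv i)) :
    ∫ p, max 0 (1 - p.2 * ∑ j, Function.update w i 0 j * (p.1 j + eqPerturbation μv ε p j))
        ∂jointMeasure ηp ηn q
      ≤ ∫ p, max 0 (1 - p.2 * ∑ j, w j * (p.1 j + eqPerturbation μv ε p j))
        ∂jointMeasure ηp ηn q := by
  cases d with
  | zero => exact i.elim0
  | succ n =>
  have hδm := measurable_eqPerturbation μv ε (d := n+1)
  have hδb := eqPert_bound μv ε hε (d := n+1)
  set a : Fin (n+1) → ℝ := avec μv ε with ha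
  set c₁ : ℝ := 1 + ∑ j, w j * a j with hc₁
  set c₀ : ℝ := 1 + ∑ j, Function.update w i 0 j * a j with hc₀
  have hdiff : c₁ - c₀ = w i * a i := by
    have h : ∑ j, w j * a j - ∑ j, Function.update w i 0 j * a j = w i * a i := by
      rw [← Finset.sum_sub_distrib, Finset.sum_eq_single i]
      · simp
      · intro j _ hj; simp [Function.update_of_ne hj]
      · simp
    rw [hc₁, hc₀]; linarith
  have hwmu : w i * μv i ≤ w i * a i := by
    have := mul_sub (w i) (a i) (μv i)
    rw [ha] at *
    nlinarith [hcond]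
  -- rewrite integrands at labels 1 and -1
  have keyP : ∀ (v : Fin (n+1) → ℝ) (x : Fin (n+1) → ℝ),
      (1 : ℝ) - 1 * ∑ j, v j * (x j + eqPerturbation μv ε (x, 1) j)
        = (1 + ∑ j, v j * a j) + ∑ j, (-(v j)) * x j := by
    intro v x
    simp only [eqPert_pos, one_mul, ← ha]
    have h1 : ∑ j, v j * (x j + -(a j)) = ∑ j, v j * x j - ∑ j, v j * a j := by
      rw [← Finset.sum_sub_distrib]; exact Finset.sum_congr rfl fun j _ => by ring
    have h2 : ∑ j, (-(v j)) * x j = -∑ j, v j * x j := by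
      simp [neg_mul]
    rw [h1, h2]; ring
  have keyN : ∀ (v : Fin (n+1) → ℝ) (x : Fin (n+1) → ℝ),
      (1 : ℝ) - (-1) * ∑ j, v j * (x j + eqPerturbation μv ε (x, -1) j)
        = (1 + ∑ j, v j * a j) + ∑ j, v j * x j := by
    intro v x
    simp only [eqPert_neg, ← ha]
    have h1 : ∑ j, v j * (x j + a j) = ∑ j, v j * x j + ∑ j, v j * a j := by
      rw [← Finset.sum_add_distrib]; exact Finset.sum_congr rfl fun j _ => by ring
    rw [h1]; ring
  -- decompose both sides
  rw [joint_integral ηp ηn q hq (measurable_hinge_integrand _ _ hδm)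
      (integrable_hinge_label ηp hip _ ε hε 1 (by norm_num) _ hδm hδb)
      (integrable_hinge_label ηn hin _ ε hε (-1) (by norm_num) _ hδm hδb),
    joint_integral ηp ηn q hq (measurable_hinge_integrand _ _ hδm)
      (integrable_hinge_label ηp hip _ ε hε 1 (by norm_num) _ hδm hδb)
      (integrable_hinge_label ηn hin _ ε hε (-1) (by norm_num) _ hδm hδb)]
  have hupdneg : ∀ j, Function.update (fun j => -(w j)) i 0 j = -(Function.update w i 0 j) := by
    intro j; by_cases h : j = i
    · subst h; simp
    · simp [Function.update_of_ne h]
  refine add_le_add ?_ ?_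
  · refine mul_le_mul_of_nonneg_left ?_ ENNReal.toReal_nonneg
    calc (∫ x, max 0 (1 - (x, (1:ℝ)).2 * ∑ j, Function.update w i 0 j *
            ((x, (1:ℝ)).1 j + eqPerturbation μv ε (x, 1) j)) ∂Measure.pi ηp)
        = ∫ x, max 0 (c₀ + ∑ j, Function.update (fun j => -(w j)) i 0 j * x j) ∂Measure.pi ηp := by
          apply integral_congr_ae
          filter_upwards with x
          congr 1
          simp only [hupdneg]
          rw [hc₀]
          exact keyP (Function.update w i 0) x
      _ ≤ ∫ x, max 0 (c₁ + ∑ j, (-(w j)) * x j) ∂Measure.pi ηp := by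
          refine key_pi ηp hip _ c₀ c₁ i ?_
          rw [hmeanp]
          linarith
      _ = _ := by
          apply integral_congr_ae
          filter_upwards with x
          congr 1
          rw [hc₁]
          exact (keyP w x).symm
  · refine mul_le_mul_of_nonneg_left ?_ ENNReal.toReal_nonneg
    calc (∫ x, max 0 (1 - (x, (-1:ℝ)).2 * ∑ j, Function.update w i 0 j *
            ((x, (-1:ℝ)).1 j + eqPerturbation μv ε (x, -1) j)) ∂Measure.pi ηn)
        = ∫ x, max 0 (c₀ + ∑ j, Function.update w i 0 j * x j) ∂Measure.pi ηn := by
          apply integral_congr_ae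
          filter_upwards with x
          congr 1
          rw [hc₀]
          exact keyN (Function.update w i 0) x
      _ ≤ ∫ x, max 0 (c₁ + ∑ j, w j * x j) ∂Measure.pi ηn := by
          refine key_pi ηn hin w c₀ c₁ i ?_
          rw [hmeann]
          linarith
      _ = _ := by
          apply integral_congr_ae
          filter_upwards with x
          congr 1
          rw [hc₁]
          exact (keyN w x).symm

end NashAux

/-- existence of a pure-strategy Nash equilibrium of the SLAR game. Taking
`δ*` to shift every robust feature `i` (with `μᵢ > ε`, wlog positive) by `-yε` and every
non-robust feature by `-yμⱼ`, and `w*` the minimizer of the regularized SVM objective on the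
perturbed data, the pair `(δ*, w*)` is a Nash equilibrium: `δ*` is an admissible best response
against `w*`, and `w*` is a best response against `δ*`. -/
theorem nash_equilibrium_exists {d : ℕ} (ηp ηn : Fin d → Measure ℝ)
    [∀ i, IsProbabilityMeasure (ηp i)] [∀ i, IsProbabilityMeasure (ηn i)]
    (q : ℝ≥0∞) (hq : q ≤ 1) (lam ε : ℝ) (hlam : 0 < lam) (hε : 0 ≤ ε)
    (μv : Fin d → ℝ)
    (hip : ∀ j, Integrable (fun t : ℝ => t) (ηp j))
    (hin : ∀ j, Integrable (fun t : ℝ => t) (ηn j))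
    (hmeanp : ∀ i, (∫ t, t ∂(ηp i)) = μv i)
    (hmeann : ∀ i, (∫ t, t ∂(ηn i)) = -(μv i))
    (hwlog : ∀ i, ε < |μv i| → ε < μv i)
    (wstar : Fin d → ℝ)
    (hmin : ∀ w, slarPayoff (jointMeasure ηp ηn q) lam (eqPerturbation μv ε) wstar ≤
      slarPayoff (jointMeasure ηp ηn q) lam (eqPerturbation μv ε) w) :
    Measurable (eqPerturbation μv ε (d := d)) ∧
    (∀ p i, |eqPerturbation μv ε p i| ≤ ε) ∧
    (∀ δ : (Fin d → ℝ) × ℝ → Fin d → ℝ, Measurable δ → (∀ p i, |δ p i| ≤ ε) →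
      slarPayoff (jointMeasure ηp ηn q) lam δ wstar ≤
        slarPayoff (jointMeasure ηp ηn q) lam (eqPerturbation μv ε) wstar) ∧
    (∀ w, slarPayoff (jointMeasure ηp ηn q) lam (eqPerturbation μv ε) wstar ≤
      slarPayoff (jointMeasure ηp ηn q) lam (eqPerturbation μv ε) w) := by
  have hδm := measurable_eqPerturbation μv ε (d := d)
  have hδb := eqPert_bound μv ε hε (d := d)
  refine ⟨hδm, hδb, ?_, hmin⟩
  -- key consequence of optimality
  have main : ∀ i : Fin d, 0 ≤ wstar i * (avec μv ε i - μv i) → wstar i ≠ 0 → False := by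
    intro i hcond hne
    have hI := hinge_update_le_s12 ηp ηn q hq ε hε μv hip hin hmeanp hmeann wstar i hcond
    have hP := hmin (Function.update wstar i 0)
    unfold slarPayoff at hP
    have hsq : ∑ j, (Function.update wstar i 0 j)^2 = ∑ j, (wstar j)^2 - (wstar i)^2 := by
      have h : ∑ j, (wstar j)^2 - ∑ j, (Function.update wstar i 0 j)^2 = (wstar i)^2 := by
        rw [← Finset.sum_sub_distrib, Finset.sum_eq_single i]
        · simp
        · intro j _ hj; simp [Function.update_of_ne hj]
        · simp
      linarith
    rw [hsq] at hP
    have hpos : 0 < (wstar i)^2 := by positivity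
    nlinarith [hI, hP]
  have hrobust : ∀ i, ε < |μv i| → 0 ≤ wstar i := by
    intro i hr
    by_contra hneg
    push_neg at hneg
    refine main i ?_ (ne_of_lt hneg)
    have hai : avec μv ε i = ε := if_pos hr
    have hμ := hwlog i hr
    rw [hai]
    nlinarith
  have hnonrob : ∀ i, ¬ ε < |μv i| → wstar i = 0 := by
    intro i hr
    by_contra hne
    refine main i ?_ hne
    have hai : avec μv ε i = μv i := if_neg hr
    rw [hai]
    simp
  -- best response property of δ*
  intro δ hδmeas hδbound
  unfold slarPayoff
  refine add_le_add ?_ le_rfl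
  rw [joint_integral ηp ηn q hq (measurable_hinge_integrand wstar δ hδmeas)
      (integrable_hinge_label ηp hip wstar ε hε 1 (by norm_num) δ hδmeas hδbound)
      (integrable_hinge_label ηn hin wstar ε hε (-1) (by norm_num) δ hδmeas hδbound),
    joint_integral ηp ηn q hq (measurable_hinge_integrand wstar _ hδm)
      (integrable_hinge_label ηp hip wstar ε hε 1 (by norm_num) _ hδm hδb)
      (integrable_hinge_label ηn hin wstar ε hε (-1) (by norm_num) _ hδm hδb)]
  refine add_le_add ?_ ?_
  · refine mul_le_mul_of_nonneg_left ?_ ENNReal.toReal_nonneg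
    refine integral_mono
      (integrable_hinge_label ηp hip wstar ε hε 1 (by norm_num) δ hδmeas hδbound)
      (integrable_hinge_label ηp hip wstar ε hε 1 (by norm_num) _ hδm hδb) ?_
    intro x
    dsimp only
    refine max_le_max le_rfl ?_
    simp only [one_mul, eqPert_pos]
    have hsum : ∑ j, wstar j * (x j + -(avec μv ε j)) ≤ ∑ j, wstar j * (x j + δ (x, 1) j) := by
      refine Finset.sum_le_sum fun j _ => ?_
      by_cases hr : ε < |μv j|
      · have h0 : 0 ≤ wstar j := hrobust j hr
        have ha : avec μv ε j = ε := if_pos hr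
        have hd : -ε ≤ δ (x, 1) j := (abs_le.1 (hδbound _ j)).1
        rw [ha]
        nlinarith
      · rw [hnonrob j hr]; simp
    linarith
  · refine mul_le_mul_of_nonneg_left ?_ ENNReal.toReal_nonneg
    refine integral_mono
      (integrable_hinge_label ηn hin wstar ε hε (-1) (by norm_num) δ hδmeas hδbound)
      (integrable_hinge_label ηn hin wstar ε hε (-1) (by norm_num) _ hδm hδb) ?_
    intro x
    dsimp only
    refine max_le_max le_rfl ?_
    simp only [eqPert_neg]
    have hsum : ∑ j, wstar j * (x j + δ (x, -1) j) ≤ ∑ j, wstar j * (x j + avec μv ε j) := by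
      refine Finset.sum_le_sum fun j _ => ?_
      by_cases hr : ε < |μv j|
      · have h0 : 0 ≤ wstar j := hrobust j hr
        have ha : avec μv ε j = ε := if_pos hr
        have hd : δ (x, -1) j ≤ ε := (abs_le.1 (hδbound _ j)).2
        rw [ha]
        nlinarith
      · rw [hnonrob j hr]; simp
    nlinarith
end
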